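/- For the damped harmonic oscillator u'' = -α u' - λ u in the underdamped case α^2 < 4λ, the function E(u,u1) = (1/2) exp((α/ω) arctan((α u1 + 2λ u)/(2ω u1))) · (α u u1 + u1^2 + λ u^2), with ω = (1/2)√(4λ - α^2), satisfies the PDE u1 E_u - (α u1 + λ u) E_{u1} = 0 on the region u1 ≠ 0, α u u1 + u1^2 + λ u^2 > 0. In particular, E is constant along solutions of the ODE. -/

import Mathlib

noncomputable def Dosc (α lam u u1 du du1 : ℝ) : ℝ :=
  Real.exp ((α / (Real.sqrt (4 * lam - α ^ 2) / 2)) *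
      Real.arctan ((α * u1 + 2 * lam * u) / (2 * (Real.sqrt (4 * lam - α ^ 2) / 2) * u1))) / 2
    * ((α / (Real.sqrt (4 * lam - α ^ 2) / 2)) *
        (lam * (du * u1 - u * du1) / ((Real.sqrt (4 * lam - α ^ 2) / 2) * u1 ^ 2)) /
        (1 + ((α * u1 + 2 * lam * u) / (2 * (Real.sqrt (4 * lam - α ^ 2) / 2) * u1)) ^ 2)
        * (α * u * u1 + u1 ^ 2 + lam * u ^ 2)
      + (α * du * u1 + α * u * du1 + 2 * u1 * du1 + 2 * lam * u * du))

theorem osc_key (α lam : ℝ) (h : α ^ 2 < 4 * lam) (f g : ℝ → ℝ) (df dg x : ℝ)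
    (hf : HasDerivAt f df x) (hg : HasDerivAt g dg x) (hne : g x ≠ 0) :
    HasDerivAt (fun t =>
        Real.exp ((α / (Real.sqrt (4 * lam - α ^ 2) / 2)) *
            Real.arctan ((α * g t + 2 * lam * f t) /
              (2 * (Real.sqrt (4 * lam - α ^ 2) / 2) * g t))) / 2
          * (α * f t * g t + g t ^ 2 + lam * f t ^ 2))
      (Dosc α lam (f x) (g x) df dg) x := by
  set s := Real.sqrt (4 * lam - α ^ 2) with hsdef
  have hs2 : s ^ 2 = 4 * lam - α ^ 2 := Real.sq_sqrt (by nlinarith)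
  have hspos : 0 < s := Real.sqrt_pos.mpr (by nlinarith)
  have hden : 2 * (s / 2) * g x ≠ 0 := by
    simp [hspos.ne', hne]
  have hA : HasDerivAt (fun t => (α * g t + 2 * lam * f t) / (2 * (s / 2) * g t))
      (((α * dg + 2 * lam * df) * (2 * (s / 2) * g x)
        - (α * g x + 2 * lam * f x) * (2 * (s / 2) * dg)) / (2 * (s / 2) * g x) ^ 2) x := by
    exact ((hg.const_mul α).add (hf.const_mul (2 * lam))).div (hg.const_mul (2 * (s / 2))) hden
  have harctan := hA.arctan
  have hmul := harctan.const_mul (α / (s / 2))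
  have hexp := hmul.exp
  have hdiv := hexp.div_const 2
  have hQ : HasDerivAt (fun t => α * f t * g t + g t ^ 2 + lam * f t ^ 2)
      ((α * df * g x + α * f x * dg) + 2 * g x ^ 1 * dg + lam * (2 * f x ^ 1 * df)) x := by
    exact (((hf.const_mul α).mul hg).add (hg.pow 2)).add ((hf.pow 2).const_mul lam)
  have htot := hdiv.mul hQ
  convert htot using 1
  · rfl
  · rfl
  · rfl
  have h1A : (0:ℝ) < 1 + ((α * g x + 2 * lam * f x) / (2 * (s / 2) * g x)) ^ 2 := by positivity
  rw [Dosc, ← hsdef]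
  field_simp
  ring

theorem osc_zero (α lam u u1 : ℝ) (h : α ^ 2 < 4 * lam) (hu1 : u1 ≠ 0)
    (hQ : 0 < α * u * u1 + u1 ^ 2 + lam * u ^ 2) :
    Dosc α lam u u1 u1 (-(α * u1 + lam * u)) = 0 := by
  set s := Real.sqrt (4 * lam - α ^ 2) with hsdef
  have hs2 : s ^ 2 = 4 * lam - α ^ 2 := Real.sq_sqrt (by nlinarith)
  have hspos : 0 < s := Real.sqrt_pos.mpr (by nlinarith)
  rw [Dosc, mul_eq_zero]
  right
  have h1A : (0:ℝ) < 1 + ((α * u1 + 2 * lam * u) / (2 * (s / 2) * u1)) ^ 2 := by positivity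
  rw [← hsdef]
  field_simp
  linear_combination (u1 ^ 2 * (α * (u1 ^ 2 + -(u * (α * u1 + lam * u))) + -(2 * u1 * (α * u1 + lam * u)) + 2 * lam * u1 * u)) * hs2

/-- for the underdamped oscillator u'' = -α u' - λ u (α² < 4λ), the
function E(u,u1) = (1/2) e^{(α/ω) arctan((α u1 + 2λ u)/(2ω u1))}(α u u1 + u1² + λ u²),
ω = (1/2)√(4λ-α²), satisfies u1 E_u - (α u1 + λ u) E_{u1} = 0 on
{u1 ≠ 0, α u u1 + u1² + λ u² > 0}; in particular E is constant along solutions. -/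
theorem damped_oscillator_energy (α lam : ℝ) (h : α ^ 2 < 4 * lam) :
    let ω : ℝ := Real.sqrt (4 * lam - α ^ 2) / 2
    let E : ℝ → ℝ → ℝ := fun u u1 =>
      Real.exp ((α / ω) * Real.arctan ((α * u1 + 2 * lam * u) / (2 * ω * u1))) / 2
        * (α * u * u1 + u1 ^ 2 + lam * u ^ 2)
    (∀ u u1 : ℝ, u1 ≠ 0 → 0 < α * u * u1 + u1 ^ 2 + lam * u ^ 2 →
        u1 * deriv (fun t => E t u1) u
          - (α * u1 + lam * u) * deriv (fun w => E u w) u1 = 0) ∧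
    (∀ f f' : ℝ → ℝ, (∀ x, HasDerivAt f (f' x) x) →
        (∀ x, HasDerivAt f' (-α * f' x - lam * f x) x) →
        ∀ x : ℝ, f' x ≠ 0 →
          0 < α * f x * f' x + (f' x) ^ 2 + lam * (f x) ^ 2 →
          HasDerivAt (fun t => E (f t) (f' t)) 0 x) := by
  intro ω E
  constructor
  · intro u u1 hu1 hQ
    have h1 := osc_key α lam h (fun t => t) (fun _ => u1) 1 0 u
      (hasDerivAt_id u) (hasDerivAt_const u u1) hu1
    have h2 := osc_key α lam h (fun _ => u) (fun t => t) 0 1 u1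
      (hasDerivAt_const u1 u) (hasDerivAt_id u1) hu1
    have e1 : deriv (fun t => E t u1) u = Dosc α lam u u1 1 0 := h1.deriv
    have e2 : deriv (fun w => E u w) u1 = Dosc α lam u u1 0 1 := h2.deriv
    rw [e1, e2]
    have lin : u1 * Dosc α lam u u1 1 0 - (α * u1 + lam * u) * Dosc α lam u u1 0 1
        = Dosc α lam u u1 u1 (-(α * u1 + lam * u)) := by
      simp only [Dosc]; ring
    rw [lin, osc_zero α lam u u1 h hu1 hQ]
  · intro f f' hf hf' x hne hQ
    have h3 := osc_key α lam h f f' (f' x) (-α * f' x - lam * f x) x (hf x) (hf' x) hne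
    have hz : Dosc α lam (f x) (f' x) (f' x) (-α * f' x - lam * f x) = 0 := by
      rw [show -α * f' x - lam * f x = -(α * f' x + lam * f x) by ring]
      exact osc_zero α lam (f x) (f' x) h hne hQ
    exact hz ▸ h3
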